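/- For every countable ordinal α ≥ 2, cof*(conv_α) ≥ 𝔡: any family A ⊆ conv_α such that every B ∈ conv_α is almost contained (modulo finite) in some member of A must have cardinality at least the dominating number 𝔡. -/

import Mathlib

open Set Filter Topology Ordinal

noncomputable section

/-- The derived set of `A`: the set of accumulation (limit) points of `A`. -/
def derivSet {X : Type*} [TopologicalSpace X] (A : Set X) : Set X :=
  {p | p ∈ closure (A \ {p})}

/-- The ordinal space `ω^a + 1 = [0, ω^a]` with the (order) topology. -/
abbrev OrdSpace (a : Ordinal) : Type _ := ↥(Set.Iic (omega0 ^ a))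

/-- The ideal `conv_a` on `ω^a + 1`: sets with finite derived set. -/
def convIdeal (a : Ordinal) : Set (Set (OrdSpace a)) :=
  {A | (derivSet A).Finite}

/-- `I` is an ideal of subsets. -/
structure IsIdeal {S : Type*} (I : Set (Set S)) : Prop where
  empty_mem : ∅ ∈ I
  subset_mem : ∀ {A B : Set S}, A ⊆ B → B ∈ I → A ∈ I
  union_mem : ∀ {A B : Set S}, A ∈ I → B ∈ I → A ∪ B ∈ I

/-- The subsequence of `f` indexed by `A` converges to `x`. -/
def ConvAlong {X : Type*} [TopologicalSpace X] (f : ℕ → X) (A : Set ℕ) (x : X) : Prop :=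
  ∀ U ∈ nhds x, {n ∈ A | f n ∉ U}.Finite

/-- Katětov order: `J ≤_K I`, where `I` lives on `X` and `J` on `Y`. -/
def KatetovLE {X Y : Type*} (J : Set (Set Y)) (I : Set (Set X)) : Prop :=
  ∃ f : X → Y, ∀ A ∈ J, f ⁻¹' A ∈ I

/-- `X ∈ FinBW(I)`: every sequence in `X` has a convergent subsequence indexed
by an `I`-positive set. -/
def InFinBW (I : Set (Set ℕ)) (X : Type*) [TopologicalSpace X] : Prop :=
  ∀ f : ℕ → X, ∃ A : Set ℕ, A ∉ I ∧ ∃ x : X, ConvAlong f A x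

/-- The dominating number `𝔡`. -/
def domNumber : Cardinal.{0} :=
  sInf {c : Cardinal.{0} | ∃ F : Set (ℕ → ℕ), Cardinal.mk F = c ∧
    ∀ g : ℕ → ℕ, ∃ f ∈ F, ∀ᶠ n in atTop, g n ≤ f n}


lemma accPt_subtype' {X : Type*} [TopologicalSpace X] {s : Set X} {p : X} (hp : p ∈ s)
    (S : Set ↥s) :
    AccPt (⟨p, hp⟩ : ↥s) (𝓟 S) ↔ AccPt p (𝓟 ((↑) '' S : Set X)) := by
  rw [accPt_iff_nhds, accPt_iff_nhds]
  constructor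
  · intro h U hU
    obtain ⟨y, ⟨hyU, hyS⟩, hyne⟩ :=
      h ((↑) ⁻¹' U) (by rw [nhds_subtype]; exact preimage_mem_comap hU)
    exact ⟨↑y, ⟨hyU, mem_image_of_mem _ hyS⟩, fun hc => hyne (Subtype.ext hc)⟩
  · intro h U hU
    rw [nhds_subtype, mem_comap] at hU
    obtain ⟨V, hV, hVU⟩ := hU
    obtain ⟨y, ⟨hyV, z, hzS, rfl⟩, hyne⟩ := h V hV
    exact ⟨z, ⟨hVU hyV, hzS⟩, fun hc => hyne (by rw [hc])⟩

lemma finite_not_accPt {X : Type*} [TopologicalSpace X] [T1Space X] {S : Set X}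
    (hS : S.Finite) (p : X) : ¬ AccPt p (𝓟 S) := by
  intro h
  rw [accPt_principal_iff_clusterPt, ← mem_closure_iff_clusterPt,
    ((hS.subset diff_subset).isClosed).closure_eq] at h
  exact h.2 rfl

lemma accPt_inter_Iio {p c : Ordinal} {S : Set Ordinal} (hpc : p < c)
    (h : AccPt p (𝓟 S)) : AccPt p (𝓟 (S ∩ Iio c)) := by
  have h' := (Ordinal.isAcc_iff _ _).mp h
  refine (Ordinal.isAcc_iff _ _).mpr ⟨h'.1, fun q hq => ?_⟩
  obtain ⟨x, hxS, hx⟩ := h'.2 q hq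
  exact ⟨x, ⟨hxS, hx.2.trans hpc⟩, hx⟩

def ptO (n k : ℕ) : Ordinal := omega0 * n + k

lemma ptO_lt_succ (n k : ℕ) : ptO n k < omega0 * ((n : Ordinal) + 1) := by
  rw [mul_add_one]
  exact (add_lt_add_iff_left _).mpr (nat_lt_omega0 k)

lemma ptO_lt_sq (n k : ℕ) : ptO n k < omega0 * omega0 :=
  (ptO_lt_succ n k).trans_le (mul_le_mul_right (by
    simpa using (nat_lt_omega0 (n + 1)).le) _)

lemma ptO_inj {n k m j : ℕ} (h : ptO n k = ptO m j) : n = m ∧ k = j := by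
  have key : ∀ {n m : ℕ}, n < m → ∀ k j, ptO n k < ptO m j := by
    intro n m hnm k j
    calc ptO n k < omega0 * ((n : Ordinal) + 1) := ptO_lt_succ n k
      _ ≤ omega0 * (m : Ordinal) := mul_le_mul_right
          (by exact_mod_cast Nat.succ_le_of_lt hnm) _
      _ ≤ ptO m j := le_self_add
  rcases lt_trichotomy n m with h1 | h1 | h1
  · exact absurd h (key h1 k j).ne
  · subst h1
    refine ⟨rfl, ?_⟩
    have : (k : Ordinal) = j := (add_right_inj _).mp h
    exact_mod_cast this
  · exact absurd h.symm (key h1 j k).ne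

lemma omega_mul_succ_lt_sq (n : ℕ) : omega0 * ((n : Ordinal) + 1) < omega0 * omega0 :=
  mul_lt_mul_of_pos_left (by exact_mod_cast nat_lt_omega0 (n + 1)) omega0_pos

lemma derivSet_eq_derivedSet {X : Type*} [TopologicalSpace X] (A : Set X) :
    derivSet A = derivedSet A := by
  ext p
  rw [mem_derivedSet, accPt_principal_iff_clusterPt, derivSet, mem_setOf_eq,
    mem_closure_iff_clusterPt]

/-- `cof*(conv_α) ≥ 𝔡`: every family cofinal in `conv_α` with respect to
almost-containment has cardinality at least the dominating number. -/
theorem stmt19 (a : Ordinal.{0}) (ha : 2 ≤ a) (hac : a.card ≤ Cardinal.aleph0)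
    (𝒜 : Set (Set (OrdSpace a))) (h𝒜 : ∀ A ∈ 𝒜, A ∈ convIdeal a)
    (hcof : ∀ B ∈ convIdeal a, ∃ A ∈ 𝒜, (B \ A).Finite) :
    Cardinal.lift.{1} domNumber ≤ Cardinal.mk 𝒜 := by
  classical
  -- basic arithmetic
  have h2 : omega0 * omega0 ≤ omega0 ^ a := by
    calc omega0 * omega0 = omega0 ^ (2 : Ordinal) := by
          rw [← succ_one, opow_succ, opow_one]
    _ ≤ omega0 ^ a := opow_le_opow_right omega0_pos ha
  have hptle : ∀ n k : ℕ, ptO n k ∈ Set.Iic (omega0 ^ a) :=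
    fun n k => ((ptO_lt_sq n k).trans_le h2).le
  set ptm : ℕ → ℕ → OrdSpace a := fun n k => ⟨ptO n k, hptle n k⟩ with hptm
  have hlimle : ∀ n : ℕ, omega0 * ((n : Ordinal) + 1) ∈ Set.Iic (omega0 ^ a) :=
    fun n => ((omega_mul_succ_lt_sq n).trans_le h2).le
  have hptm_inj : ∀ {n k m j : ℕ}, ptm n k = ptm m j → n = m ∧ k = j := by
    intro n k m j h
    exact ptO_inj (Subtype.mk_eq_mk.mp h)
  -- claim A : B_g is in the ideal
  have keyBg : ∀ g : ℕ → ℕ, (⋃ n, (fun k => ptm n k) '' Set.Iic (g n)) ∈ convIdeal a := by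
    intro g
    have himg : ((↑) '' (⋃ n, (fun k => ptm n k) '' Set.Iic (g n)) : Set Ordinal)
        = ⋃ n, (fun k : ℕ => ptO n k) '' Set.Iic (g n) := by
      rw [image_iUnion]
      exact iUnion_congr fun n => by rw [image_image]
    have hsub : derivSet (⋃ n, (fun k => ptm n k) '' Set.Iic (g n)) ⊆
        {(⟨omega0 * omega0, h2⟩ : OrdSpace a)} := by
      rintro ⟨p, hp⟩ hmem
      have hmem' : AccPt p (𝓟 (⋃ n, (fun k : ℕ => ptO n k) '' Set.Iic (g n))) := by
        rw [derivSet_eq_derivedSet, mem_derivedSet, accPt_subtype', himg] at hmem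
        exact hmem
      rw [mem_singleton_iff]; refine Subtype.ext ?_
      rcases lt_trichotomy p (omega0 * omega0) with hlt | heq | hgt
      · exfalso
        obtain ⟨c', hc', hpc⟩ := (lt_mul_iff_of_isSuccLimit isSuccLimit_omega0).mp hlt
        obtain ⟨n, rfl⟩ := lt_omega0.mp hc'
        have hacc2 := accPt_inter_Iio hpc hmem'
        have hfin : ((⋃ m, (fun k : ℕ => ptO m k) '' Set.Iic (g m)) ∩
            Set.Iio (omega0 * (n : Ordinal))).Finite := by
          apply Set.Finite.subset (Set.Finite.biUnion (Set.finite_Iio n)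
            (fun m _ => (Set.finite_Iic (g m)).image (fun k : ℕ => ptO m k)))
          rintro x ⟨hx1, hx2⟩
          simp only [mem_iUnion] at hx1 ⊢
          obtain ⟨m, k, hk, rfl⟩ := hx1
          refine ⟨m, ?_, k, hk, rfl⟩
          by_contra hmn
          rw [mem_Iio, not_lt] at hmn
          have : omega0 * (n : Ordinal) ≤ ptO m k :=
            le_trans (mul_le_mul_right (by exact_mod_cast hmn) _) le_self_add
          exact this.not_gt hx2
        exact finite_not_accPt hfin p hacc2
      · exact heq
      · exfalso
        obtain ⟨x, hxS, hx2⟩ := ((Ordinal.isAcc_iff _ _).mp hmem').2 (omega0 * omega0) hgt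
        simp only [mem_iUnion] at hxS
        obtain ⟨m, k, -, rfl⟩ := hxS
        exact (ptO_lt_sq m k).not_gt hx2.1
    exact (Set.finite_singleton _).subset hsub
  -- claim B : infinitely many points in a column give an accumulation point
  have keyK : ∀ (A : Set (OrdSpace a)) (n : ℕ), {k : ℕ | ptm n k ∈ A}.Infinite →
      (⟨omega0 * ((n : Ordinal) + 1), hlimle n⟩ : OrdSpace a) ∈ derivSet A := by
    intro A n hinf
    rw [derivSet_eq_derivedSet, mem_derivedSet, accPt_subtype']
    refine (Ordinal.isAcc_iff _ _).mpr ⟨?_, ?_⟩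
    · exact (mul_pos omega0_pos (by exact_mod_cast Nat.succ_pos n)).ne'
    · intro q hq
      rw [mul_add_one] at hq
      obtain ⟨c', hc', hqc⟩ := (lt_add_iff_of_isSuccLimit isSuccLimit_omega0).mp hq
      obtain ⟨j, rfl⟩ := lt_omega0.mp hc'
      obtain ⟨k, hkA, hjk⟩ := hinf.exists_gt j
      refine ⟨ptO n k, ⟨ptm n k, hkA, rfl⟩, ?_, ptO_lt_succ n k⟩
      calc q < omega0 * (n : Ordinal) + (j : Ordinal) := hqc
      _ ≤ ptO n k := (add_le_add_iff_left _).mpr (by exact_mod_cast hjk.le)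
  -- claim C : only finitely many infinite columns
  have keyFin : ∀ A : Set (OrdSpace a), (derivSet A).Finite →
      {n : ℕ | {k : ℕ | ptm n k ∈ A}.Infinite}.Finite := by
    intro A hA
    have hinjlim : Function.Injective
        (fun n : ℕ => (⟨omega0 * ((n : Ordinal) + 1), hlimle n⟩ : OrdSpace a)) := by
      have hmono : ∀ {n m : ℕ}, n < m →
          omega0 * ((n : Ordinal) + 1) < omega0 * ((m : Ordinal) + 1) := by
        intro n m h
        exact mul_lt_mul_of_pos_left (by exact_mod_cast Nat.succ_lt_succ h) omega0_pos
      intro n m h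
      rw [Subtype.mk_eq_mk] at h
      rcases lt_trichotomy n m with h1 | h1 | h1
      · exact absurd h (hmono h1).ne
      · exact h1
      · exact absurd h.symm (hmono h1).ne
    apply Set.Finite.subset (hA.preimage hinjlim.injOn)
    intro n hn
    exact keyK A n hn
  -- the dominating functions
  set hFun : Set (OrdSpace a) → ℕ → ℕ := fun A n => sSup {k : ℕ | ptm n k ∈ A} with hhFun
  have keyDom : ∀ g : ℕ → ℕ, ∃ A ∈ 𝒜, ∀ᶠ n in atTop, g n ≤ hFun A n := by
    intro g
    obtain ⟨A, hA𝒜, hfin⟩ := hcof _ (keyBg g)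
    refine ⟨A, hA𝒜, ?_⟩
    rw [← Nat.cofinite_eq_atTop, eventually_cofinite]
    have hφinj : Function.Injective (fun n : ℕ => ptm n (g n)) := by
      intro n m h
      exact (hptm_inj h).1
    have h1 : {n : ℕ | ptm n (g n) ∉ A}.Finite := by
      apply Set.Finite.subset (hfin.preimage hφinj.injOn)
      intro n hn
      refine ⟨?_, hn⟩
      exact mem_iUnion.mpr ⟨n, mem_image_of_mem _ (self_mem_Iic (α := ℕ))⟩
    apply Set.Finite.subset (h1.union (keyFin A (h𝒜 A hA𝒜)))
    intro n hn
    simp only [mem_setOf_eq, not_le] at hn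
    by_contra hc
    simp only [mem_union, mem_setOf_eq, not_or, not_not, Set.not_infinite] at hc
    have hgn : g n ∈ {k : ℕ | ptm n k ∈ A} := hc.1
    exact hn.not_ge (le_csSup hc.2.bddAbove hgn)
  -- cardinal bookkeeping
  have hdom : domNumber ≤ Cardinal.mk (Set.range (fun A : ↥𝒜 => hFun ↑A)) := by
    apply csInf_le'
    refine ⟨Set.range (fun A : ↥𝒜 => hFun ↑A), rfl, ?_⟩
    intro g
    obtain ⟨A, hA, hd⟩ := keyDom g
    exact ⟨hFun A, ⟨⟨A, hA⟩, rfl⟩, hd⟩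
  calc Cardinal.lift.{1} domNumber
      ≤ Cardinal.lift.{1} (Cardinal.mk (Set.range (fun A : ↥𝒜 => hFun ↑A))) :=
        Cardinal.lift_le.mpr hdom
    _ ≤ Cardinal.lift.{0} (Cardinal.mk ↥𝒜) := Cardinal.mk_range_le_lift
    _ = Cardinal.mk ↥𝒜 := Cardinal.lift_id' _
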